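/- Let h : [0,1] → [0,1] be continuous. Suppose there exist intervals I₀, I₁, I₂ ⊆ [0,1] with I₁ ⊂ I₀, I₂ ⊂ I₀, the interiors of I₁ and I₂ disjoint, and h(I₁) = h(I₂) = I₀. Then there exists a point x₀ ∈ I₀ with h³(x₀) = x₀ and h(x₀) ≠ x₀ and h²(x₀) ≠ x₀, i.e., a periodic point of period exactly 3. -/

import Mathlib

open Set

private lemma exact_aux (f : ℝ → ℝ) (u v r s : ℝ) (huv : u ≤ v) (hrs : r ≤ s)
    (hf : ContinuousOn f (Icc u v)) (hu : f u = r) (hv : f v = s) :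
    ∃ p' q', u ≤ p' ∧ p' ≤ q' ∧ q' ≤ v ∧ f '' Icc p' q' = Icc r s := by
  classical
  set A : Set ℝ := Icc u v ∩ f ⁻¹' {r} with hA
  have hA_closed : IsClosed A := hf.preimage_isClosed_of_isClosed isClosed_Icc isClosed_singleton
  have hA_cpt : IsCompact A := isCompact_Icc.of_isClosed_subset hA_closed inter_subset_left
  have hA_ne : A.Nonempty := ⟨u, ⟨le_refl u, huv⟩, by simpa using hu⟩
  set p' := sSup A with hp'def
  have hp'A : p' ∈ A := hA_cpt.sSup_mem hA_ne
  have hp'Icc : p' ∈ Icc u v := hp'A.1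
  have hfp' : f p' = r := hp'A.2
  set B : Set ℝ := Icc p' v ∩ f ⁻¹' {s} with hB
  have hB_closed : IsClosed B :=
    (hf.mono (Icc_subset_Icc hp'Icc.1 le_rfl)).preimage_isClosed_of_isClosed
      isClosed_Icc isClosed_singleton
  have hB_cpt : IsCompact B := isCompact_Icc.of_isClosed_subset hB_closed inter_subset_left
  have hB_ne : B.Nonempty := ⟨v, ⟨hp'Icc.2, le_refl v⟩, by simpa using hv⟩
  set q' := sInf B with hq'def
  have hq'B : q' ∈ B := hB_cpt.sInf_mem hB_ne
  have hq'Icc : q' ∈ Icc p' v := hq'B.1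
  have hfq' : f q' = s := hq'B.2
  refine ⟨p', q', hp'Icc.1, hq'Icc.1, hq'Icc.2, ?_⟩
  have hsubpq : Icc p' q' ⊆ Icc u v := Icc_subset_Icc hp'Icc.1 (hq'Icc.2)
  apply Subset.antisymm
  · rintro y ⟨x, hx, rfl⟩
    constructor
    · by_contra hcon
      push_neg at hcon
      have hxq : x ≤ q' := hx.2
      have hxlt : p' < x := by
        rcases lt_or_eq_of_le hx.1 with h' | h'
        · exact h'
        · exfalso; rw [← h', hfp'] at hcon; exact lt_irrefl r hcon
      have : r ∈ Icc (f x) (f q') := ⟨hcon.le, hfq' ▸ hrs⟩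
      obtain ⟨y, hy, hfy⟩ := intermediate_value_Icc hxq
        (hf.mono (Icc_subset_Icc (hsubpq ⟨hx.1, hx.2⟩).1 hq'Icc.2)) this
      have hyA : y ∈ A := ⟨⟨le_trans (hsubpq hx).1 hy.1, le_trans hy.2 hq'Icc.2⟩, by simpa using hfy⟩
      have : y ≤ p' := le_csSup hA_cpt.bddAbove hyA
      linarith [hy.1]
    · by_contra hcon
      push_neg at hcon
      have hxlt : x < q' := by
        rcases lt_or_eq_of_le hx.2 with h' | h'
        · exact h'
        · exfalso; rw [h', hfq'] at hcon; exact lt_irrefl s hcon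
      have : s ∈ Icc (f p') (f x) := ⟨hfp' ▸ hrs, hcon.le⟩
      obtain ⟨y, hy, hfy⟩ := intermediate_value_Icc hx.1
        (hf.mono (Icc_subset_Icc hp'Icc.1 (hsubpq hx).2)) this
      have hyB : y ∈ B := ⟨⟨hy.1, le_trans hy.2 (le_trans hx.2 hq'Icc.2)⟩, by simpa using hfy⟩
      have : q' ≤ y := csInf_le hB_cpt.bddBelow hyB
      linarith [hy.2]
  · have := intermediate_value_Icc hq'Icc.1 (hf.mono hsubpq)
    rw [hfp', hfq'] at this
    exact this

private lemma exact_preimage (f : ℝ → ℝ) (p q r s : ℝ) (hrs : r ≤ s)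
    (hf : ContinuousOn f (Icc p q))
    (hr : ∃ x ∈ Icc p q, f x = r) (hs : ∃ x ∈ Icc p q, f x = s) :
    ∃ p' q', p ≤ p' ∧ p' ≤ q' ∧ q' ≤ q ∧ f '' Icc p' q' = Icc r s := by
  obtain ⟨x₁, hx₁, hfx₁⟩ := hr
  obtain ⟨x₂, hx₂, hfx₂⟩ := hs
  rcases le_total x₁ x₂ with hle | hle
  · obtain ⟨p', q', h1, h2, h3, h4⟩ := exact_aux f x₁ x₂ r s hle hrs
      (hf.mono (Icc_subset_Icc hx₁.1 hx₂.2)) hfx₁ hfx₂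
    exact ⟨p', q', le_trans hx₁.1 h1, h2, le_trans h3 hx₂.2, h4⟩
  · set g : ℝ → ℝ := fun x => f (x₂ + x₁ - x) with hgdef
    have hmapsTo : MapsTo (fun x => x₂ + x₁ - x) (Icc x₂ x₁) (Icc x₂ x₁) := by
      intro x hx
      simp only [mem_Icc]
      constructor
      · linarith [hx.2]
      · linarith [hx.1]
    have hgc : ContinuousOn g (Icc x₂ x₁) := by
      apply ContinuousOn.comp (hf.mono (Icc_subset_Icc hx₂.1 hx₁.2))
        (Continuous.continuousOn (by continuity)) hmapsTo
    have hgu : g x₂ = r := by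
      show f (x₂ + x₁ - x₂) = r
      rw [show x₂ + x₁ - x₂ = x₁ by ring]
      exact hfx₁
    have hgv : g x₁ = s := by
      show f (x₂ + x₁ - x₁) = s
      rw [show x₂ + x₁ - x₁ = x₂ by ring]
      exact hfx₂
    obtain ⟨p', q', h1, h2, h3, h4⟩ := exact_aux g x₂ x₁ r s hle hrs hgc hgu hgv
    refine ⟨x₂ + x₁ - q', x₂ + x₁ - p', by linarith [hx₂.1, h3], by linarith, by linarith [hx₁.2, h1], ?_⟩
    have himg : g '' Icc p' q' = f '' ((fun x => x₂ + x₁ - x) '' Icc p' q') := by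
      rw [← image_comp]
      rfl
    rw [image_const_sub_Icc] at himg
    rw [← h4, himg]

private lemma fix_pt (f : ℝ → ℝ) (p q : ℝ) (hpq : p ≤ q)
    (hf : ContinuousOn f (Icc p q))
    (hcov : Icc p q ⊆ f '' Icc p q) :
    ∃ x ∈ Icc p q, f x = x := by
  obtain ⟨u, hu, hfu⟩ := hcov (left_mem_Icc.2 hpq)
  obtain ⟨v, hv, hfv⟩ := hcov (right_mem_Icc.2 hpq)
  have hsub : uIcc u v ⊆ Icc p q := by
    intro x hx
    rw [Set.mem_uIcc] at hx
    rcases hx with ⟨h1, h2⟩ | ⟨h1, h2⟩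
    · exact ⟨le_trans hu.1 h1, le_trans h2 hv.2⟩
    · exact ⟨le_trans hv.1 h1, le_trans h2 hu.2⟩
  set φ : ℝ → ℝ := fun x => f x - x with hφdef
  have hφc : ContinuousOn φ (uIcc u v) := (hf.mono hsub).sub continuousOn_id
  have h0 : (0:ℝ) ∈ uIcc (φ u) (φ v) := by
    rw [Set.mem_uIcc]
    left
    constructor
    · simp [hφdef, hfu]; linarith [hu.1]
    · simp [hφdef, hfv]; linarith [hv.2]
  obtain ⟨x, hx, hφx⟩ := intermediate_value_uIcc hφc h0
  refine ⟨x, hsub hx, ?_⟩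
  have : f x - x = 0 := hφx
  linarith [this]

private lemma chain (h : ℝ → ℝ) (c' d' e' f' : ℝ) (hcd : c' ≤ d') (hef : e' ≤ f')
    (hc1 : ContinuousOn h (Icc c' d')) (hc2 : ContinuousOn h (Icc e' f'))
    (cov1 : Icc e' f' ⊆ h '' Icc c' d')
    (cov2 : Icc c' d' ⊆ h '' Icc e' f')
    (cov3 : Icc e' f' ⊆ h '' Icc e' f') :
    ∃ x ∈ Icc c' d', h (h (h x)) = x ∧ h x ∈ Icc e' f' ∧ h (h x) ∈ Icc e' f' := by
  -- J₂ ⊆ [e',f'] with h '' J₂ = [c',d']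
  obtain ⟨p₂, q₂, hp₂, hpq₂, hq₂, him2⟩ := exact_preimage h e' f' c' d' hcd hc2
    (cov2 (left_mem_Icc.2 hcd)) (cov2 (right_mem_Icc.2 hcd))
  -- J₁ ⊆ [e',f'] with h '' J₁ = [p₂,q₂]
  obtain ⟨p₁, q₁, hp₁, hpq₁, hq₁, him1⟩ := exact_preimage h e' f' p₂ q₂ hpq₂ hc2
    (cov3 ⟨hp₂, le_trans hpq₂ hq₂⟩) (cov3 ⟨le_trans hp₂ hpq₂, hq₂⟩)
  -- J₀ ⊆ [c',d'] with h '' J₀ = [p₁,q₁]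
  obtain ⟨p₀, q₀, hp₀, hpq₀, hq₀, him0⟩ := exact_preimage h c' d' p₁ q₁ hpq₁ hc1
    (cov1 ⟨hp₁, le_trans hpq₁ hq₁⟩) (cov1 ⟨le_trans hp₁ hpq₁, hq₁⟩)
  have k0 : ContinuousOn h (Icc p₀ q₀) := hc1.mono (Icc_subset_Icc hp₀ hq₀)
  have k1 : ContinuousOn h (Icc p₁ q₁) := hc2.mono (Icc_subset_Icc hp₁ hq₁)
  have k2 : ContinuousOn h (Icc p₂ q₂) := hc2.mono (Icc_subset_Icc hp₂ hq₂)
  have maps0 : MapsTo h (Icc p₀ q₀) (Icc p₁ q₁) := mapsTo_iff_image_subset.2 him0.subset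
  have maps1 : MapsTo h (Icc p₁ q₁) (Icc p₂ q₂) := mapsTo_iff_image_subset.2 him1.subset
  have cA : ContinuousOn (h ∘ h) (Icc p₀ q₀) := k1.comp k0 maps0
  have maps01 : MapsTo (h ∘ h) (Icc p₀ q₀) (Icc p₂ q₂) := maps1.comp maps0
  have cB : ContinuousOn (h ∘ (h ∘ h)) (Icc p₀ q₀) := k2.comp cA maps01
  have himcomp : (h ∘ (h ∘ h)) '' Icc p₀ q₀ = Icc c' d' := by
    rw [image_comp, image_comp, him0, him1, him2]
  have hcov : Icc p₀ q₀ ⊆ (h ∘ (h ∘ h)) '' Icc p₀ q₀ := by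
    rw [himcomp]
    exact Icc_subset_Icc hp₀ hq₀
  obtain ⟨x, hx, hfx⟩ := fix_pt (h ∘ (h ∘ h)) p₀ q₀ hpq₀ cB hcov
  refine ⟨x, ⟨le_trans hp₀ hx.1, le_trans hx.2 hq₀⟩, hfx, ?_, ?_⟩
  · have : h x ∈ Icc p₁ q₁ := maps0 hx
    exact ⟨le_trans hp₁ this.1, le_trans this.2 hq₁⟩
  · have : h (h x) ∈ Icc p₂ q₂ := maps1 (maps0 hx)
    exact ⟨le_trans hp₂ this.1, le_trans this.2 hq₂⟩

theorem stmt_6 (h : ℝ → ℝ)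
    (hcont : ContinuousOn h (Icc 0 1))
    (hmaps : MapsTo h (Icc (0:ℝ) 1) (Icc (0:ℝ) 1))
    (a b c d e f : ℝ)
    (hI₀ : Icc a b ⊆ Icc (0:ℝ) 1)
    (hab : a < b) (hcd : c < d) (hef : e < f)
    (hsub₁ : Icc c d ⊆ Icc a b) (hsub₂ : Icc e f ⊆ Icc a b)
    (hdisj : Ioo c d ∩ Ioo e f = ∅)
    (him₁ : h '' Icc c d = Icc a b) (him₂ : h '' Icc e f = Icc a b) :
    ∃ x₀ ∈ Icc a b, h^[3] x₀ = x₀ ∧ h x₀ ≠ x₀ ∧ h^[2] x₀ ≠ x₀ := by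
  have e3 : ∀ x : ℝ, h^[3] x = h (h (h x)) := fun x => rfl
  have e2 : ∀ x : ℝ, h^[2] x = h (h x) := fun x => rfl
  -- any two points in both intervals coincide
  have key : ∀ z w : ℝ, z ∈ Icc c d → z ∈ Icc e f → w ∈ Icc c d → w ∈ Icc e f → z = w := by
    intro z w hz1 hz2 hw1 hw2
    by_contra hne
    have hmid : ∀ y₁ y₂ : ℝ, y₁ < y₂ → y₁ ∈ Icc c d → y₁ ∈ Icc e f → y₂ ∈ Icc c d → y₂ ∈ Icc e f → False := by
      intro y₁ y₂ hlt h1 h2 h3 h4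
      have : (y₁ + y₂) / 2 ∈ Ioo c d ∩ Ioo e f := by
        constructor
        · exact ⟨by linarith [h1.1], by linarith [h3.2]⟩
        · exact ⟨by linarith [h2.1], by linarith [h4.2]⟩
      rw [hdisj] at this
      exact this
    rcases lt_or_gt_of_ne hne with hlt | hlt
    · exact hmid z w hlt hz1 hz2 hw1 hw2
    · exact hmid w z hlt hw1 hw2 hz1 hz2
  have hI₁ : Icc c d ⊆ Icc (0:ℝ) 1 := fun x hx => hI₀ (hsub₁ hx)
  have hI₂ : Icc e f ⊆ Icc (0:ℝ) 1 := fun x hx => hI₀ (hsub₂ hx)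
  have hc1 : ContinuousOn h (Icc c d) := hcont.mono hI₁
  have hc2 : ContinuousOn h (Icc e f) := hcont.mono hI₂
  have cov1 : Icc e f ⊆ h '' Icc c d := him₁ ▸ hsub₂
  have cov2 : Icc c d ⊆ h '' Icc e f := him₂ ▸ hsub₁
  have cov3 : Icc e f ⊆ h '' Icc e f := him₂ ▸ hsub₂
  obtain ⟨x, hx, hx3, hx1, hx2⟩ := chain h c d e f hcd.le hef.le hc1 hc2 cov1 cov2 cov3
  -- main case split
  by_cases H1 : h x = x
  case neg =>
    by_cases H2 : h (h x) = x
    · exfalso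
      apply H1
      have : h (h (h x)) = h x := congrArg h H2
      rw [hx3] at this
      exact this.symm
    · exact ⟨x, hsub₁ hx, by rw [e3]; exact hx3, H1, by rw [e2]; exact H2⟩
  case pos =>
  -- x is a fixed point of h lying in both intervals; call it m
  set m := x with hmdef
  have hm1 : m ∈ Icc c d := hx
  have hm2 : m ∈ Icc e f := H1 ▸ hx1
  have hfixm : h m = m := H1
  have hmab : m ∈ Icc a b := hsub₁ hm1
  have hac : a ≤ c := (hsub₁ (left_mem_Icc.2 hcd.le)).1
  have hdb : d ≤ b := (hsub₁ (right_mem_Icc.2 hcd.le)).2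
  have hae : a ≤ e := (hsub₂ (left_mem_Icc.2 hef.le)).1
  have hfb : f ≤ b := (hsub₂ (right_mem_Icc.2 hef.le)).2
  -- a < m
  have ham : a < m := by
    rcases lt_or_eq_of_le hmab.1 with h' | h'
    · exact h'
    · exfalso
      have hcm : c = m := le_antisymm hm1.1 (h' ▸ hac)
      have hem : e = m := le_antisymm hm2.1 (h' ▸ hae)
      have hlt : m < min d f := lt_min (hcm ▸ hcd) (hem ▸ hef)
      have := key m ((m + min d f)/2) hm1 hm2
        ⟨by rw [← hcm]; linarith, by linarith [min_le_left d f]⟩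
        ⟨by rw [← hem]; linarith, by linarith [min_le_right d f]⟩
      linarith
  -- m < b
  have hmb : m < b := by
    rcases lt_or_eq_of_le hmab.2 with h' | h'
    · exact h'
    · exfalso
      have hdm : d = m := le_antisymm (h' ▸ hdb) hm1.2
      have hfm : f = m := le_antisymm (h' ▸ hfb) hm2.2
      have hlt : max c e < m := max_lt (hdm ▸ hcd) (hfm ▸ hef)
      have := key m ((max c e + m)/2) hm1 hm2
        ⟨by linarith [le_max_left c e], by rw [← hdm]; linarith⟩
        ⟨by linarith [le_max_right c e], by rw [← hfm]; linarith⟩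
      linarith
  -- m is an endpoint of Icc c d
  have hmcd : m = c ∨ m = d := by
    by_contra hK
    push_neg at hK
    have hcm : c < m := lt_of_le_of_ne hm1.1 (Ne.symm hK.1)
    have hmd : m < d := lt_of_le_of_ne hm1.2 hK.2
    rcases lt_or_eq_of_le hm2.2 with hmf | hmf
    · -- m < f : point just above m in both
      have hlt : m < min d f := lt_min hmd hmf
      have := key m ((m + min d f)/2) hm1 hm2
        ⟨by linarith [hm1.1], by linarith [min_le_left d f]⟩
        ⟨by linarith [hm2.1], by linarith [min_le_right d f]⟩
      linarith
    · -- m = f : point just below m in both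
      have hem : e < m := hmf ▸ hef
      have hlt : max c e < m := max_lt hcm hem
      have := key m ((max c e + m)/2) hm1 hm2
        ⟨by linarith [le_max_left c e], by linarith⟩
        ⟨by linarith [le_max_right c e], by rw [← hmf]; linarith⟩
      linarith
  -- preimages of a and b in each interval
  obtain ⟨α₁, hα₁, hfα₁⟩ : ∃ x ∈ Icc c d, h x = a := by
    have : a ∈ h '' Icc c d := him₁ ▸ left_mem_Icc.2 hab.le
    obtain ⟨x, hx', hfx'⟩ := this; exact ⟨x, hx', hfx'⟩
  obtain ⟨β₁, hβ₁, hfβ₁⟩ : ∃ x ∈ Icc c d, h x = b := by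
    have : b ∈ h '' Icc c d := him₁ ▸ right_mem_Icc.2 hab.le
    obtain ⟨x, hx', hfx'⟩ := this; exact ⟨x, hx', hfx'⟩
  obtain ⟨α₂, hα₂, hfα₂⟩ : ∃ x ∈ Icc e f, h x = a := by
    have : a ∈ h '' Icc e f := him₂ ▸ left_mem_Icc.2 hab.le
    obtain ⟨x, hx', hfx'⟩ := this; exact ⟨x, hx', hfx'⟩
  obtain ⟨β₂, hβ₂, hfβ₂⟩ : ∃ x ∈ Icc e f, h x = b := by
    have : b ∈ h '' Icc e f := him₂ ▸ right_mem_Icc.2 hab.le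
    obtain ⟨x, hx', hfx'⟩ := this; exact ⟨x, hx', hfx'⟩
  have hα₁m : α₁ ≠ m := fun hEq => by rw [hEq, hfixm] at hfα₁; linarith
  have hβ₁m : β₁ ≠ m := fun hEq => by rw [hEq, hfixm] at hfβ₁; linarith
  -- new intervals
  set c'' := α₁ ⊓ β₁ with hc''def
  set d'' := α₁ ⊔ β₁ with hd''def
  set e'' := α₂ ⊓ β₂ with he''def
  set f'' := α₂ ⊔ β₂ with hf''def
  have hsubI₁ : Icc c'' d'' ⊆ Icc c d :=
    Icc_subset_Icc (le_inf hα₁.1 hβ₁.1) (sup_le hα₁.2 hβ₁.2)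
  have hsubI₂ : Icc e'' f'' ⊆ Icc e f :=
    Icc_subset_Icc (le_inf hα₂.1 hβ₂.1) (sup_le hα₂.2 hβ₂.2)
  -- m not in Icc c'' d''
  have hmnotin : m ∉ Icc c'' d'' := by
    rcases hmcd with hmc | hmd
    · intro hmem
      have h1 : c < α₁ := lt_of_le_of_ne hα₁.1 (fun hEq => hα₁m (hEq.symm.trans hmc.symm))
      have h2 : c < β₁ := lt_of_le_of_ne hβ₁.1 (fun hEq => hβ₁m (hEq.symm.trans hmc.symm))
      have : c < c'' := lt_inf_iff.2 ⟨h1, h2⟩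
      rw [hmc] at hmem
      linarith [hmem.1]
    · intro hmem
      have h1 : α₁ < d := lt_of_le_of_ne hα₁.2 (fun hEq => hα₁m (hEq.trans hmd.symm))
      have h2 : β₁ < d := lt_of_le_of_ne hβ₁.2 (fun hEq => hβ₁m (hEq.trans hmd.symm))
      have : d'' < d := sup_lt_iff.2 ⟨h1, h2⟩
      rw [hmd] at hmem
      linarith [hmem.2]
  -- images cover [a,b]
  have himg1 : Icc a b ⊆ h '' Icc c'' d'' := by
    have hcc : ContinuousOn h (uIcc α₁ β₁) := hc1.mono (by
      intro y hy
      rw [Set.mem_uIcc] at hy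
      rcases hy with ⟨h1', h2'⟩ | ⟨h1', h2'⟩
      · exact ⟨le_trans hα₁.1 h1', le_trans h2' hβ₁.2⟩
      · exact ⟨le_trans hβ₁.1 h1', le_trans h2' hα₁.2⟩)
    have := intermediate_value_uIcc hcc
    rw [hfα₁, hfβ₁, uIcc_of_le hab.le] at this
    have huIcc : uIcc α₁ β₁ = Icc c'' d'' := rfl
    rw [huIcc] at this
    exact this
  have himg2 : Icc a b ⊆ h '' Icc e'' f'' := by
    have hcc : ContinuousOn h (uIcc α₂ β₂) := hc2.mono (by
      intro y hy
      rw [Set.mem_uIcc] at hy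
      rcases hy with ⟨h1', h2'⟩ | ⟨h1', h2'⟩
      · exact ⟨le_trans hα₂.1 h1', le_trans h2' hβ₂.2⟩
      · exact ⟨le_trans hβ₂.1 h1', le_trans h2' hα₂.2⟩)
    have := intermediate_value_uIcc hcc
    rw [hfα₂, hfβ₂, uIcc_of_le hab.le] at this
    have huIcc : uIcc α₂ β₂ = Icc e'' f'' := rfl
    rw [huIcc] at this
    exact this
  -- apply chain to the trimmed intervals
  obtain ⟨y, hy, hy3, hy1, hy2⟩ := chain h c'' d'' e'' f'' inf_le_sup inf_le_sup
    (hc1.mono hsubI₁) (hc2.mono hsubI₂)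
    (fun z hz => himg1 (hsub₂ (hsubI₂ hz)))
    (fun z hz => himg2 (hsub₁ (hsubI₁ hz)))
    (fun z hz => himg2 (hsub₂ (hsubI₂ hz)))
  refine ⟨y, hsub₁ (hsubI₁ hy), by rw [e3]; exact hy3, ?_, ?_⟩
  · intro Heq
    have : y = m := key y m (hsubI₁ hy) (hsubI₂ (Heq ▸ hy1)) hm1 hm2
    exact hmnotin (this ▸ hy)
  · rw [e2]
    intro Heq
    have : y = m := key y m (hsubI₁ hy) (hsubI₂ (Heq ▸ hy2)) hm1 hm2
    exact hmnotin (this ▸ hy)
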